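/- Let I ⊂ ℤ[x_0,...,x_n] be a homogeneous ideal generated by forms F_0,...,F_m defining a projective scheme X over ℚ of pure codimension c, and let J be the ideal generated by the F_i together with all c × c minors of the Jacobian matrix (∂F_i/∂x_j). If for some prime p the scheme V(J mod p) ⊂ P^n over ℤ/(p) has codimension greater than n (i.e., is empty), then X is smooth over ℚ. -/

import Mathlib

open MvPolynomial

attribute [local instance] MvPolynomial.gradedAlgebra

namespace JacobianAux

variable {σ : Type*}

lemma degree_eq_sum_univ [Fintype σ] (u : σ →₀ ℕ) : u.degree = ∑ j, u j :=
  Finset.sum_subset (Finset.subset_univ _)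
    (fun j _ h => Finsupp.notMem_support_iff.mp h)

lemma degree_add (a b : σ →₀ ℕ) : (a + b).degree = a.degree + b.degree := by
  classical
  simp only [Finsupp.degree_eq_weight_one, map_add]

lemma degree_single (j : σ) (k : ℕ) : (Finsupp.single j k).degree = k := by
  classical
  simp only [Finsupp.degree_eq_weight_one, Finsupp.weight_apply]
  rw [Finsupp.sum_single_index] <;> simp

lemma isHomogeneous_pderiv {R : Type*} [CommSemiring R] [DecidableEq σ]
    {f : MvPolynomial σ R} {d : ℕ} (hf : f.IsHomogeneous d) (j : σ) :
    (pderiv j f).IsHomogeneous (d - 1) := by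
  have hsum : pderiv j f = ∑ u ∈ f.support, pderiv j (monomial u (coeff u f)) := by
    conv_lhs => rw [← support_sum_monomial_coeff f]
    rw [map_sum]
  rw [hsum]
  apply IsHomogeneous.sum
  intro u hu
  rw [pderiv_monomial]
  by_cases h : u j = 0
  · rw [h]
    simp only [Nat.cast_zero, mul_zero, monomial_zero]
    exact isHomogeneous_zero _ _ _
  · apply isHomogeneous_monomial
    have hud : u.degree = d := by
      by_contra hne
      exact (mem_support_iff.mp hu) (hf.coeff_eq_zero hne)
    have hdecomp : u = (u - Finsupp.single j 1) + Finsupp.single j 1 := by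
      ext k
      by_cases hk : k = j
      · subst hk
        simp only [Finsupp.add_apply, Finsupp.tsub_apply, Finsupp.single_eq_same]
        omega
      · simp [Finsupp.add_apply, Finsupp.tsub_apply, Finsupp.single_apply, Ne.symm hk]
    have := congrArg Finsupp.degree hdecomp
    rw [degree_add, degree_single] at this
    omega

lemma isHomogeneous_det {R : Type*} [CommRing R] {c : ℕ}
    (M : Matrix (Fin c) (Fin c) (MvPolynomial σ R)) (e : Fin c → ℕ)
    (h : ∀ a b, (M a b).IsHomogeneous (e a)) :
    M.det.IsHomogeneous (∑ a, e a) := by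
  rw [Matrix.det_apply]
  apply IsHomogeneous.sum
  intro τ _
  have hprod : (∏ i, M (τ i) i).IsHomogeneous (∑ a, e a) := by
    have := IsHomogeneous.prod Finset.univ (fun i => M (τ i) i) (fun i => e (τ i))
      (fun i _ => h (τ i) i)
    rwa [Equiv.sum_comp τ e] at this
  rcases Int.units_eq_one_or (Equiv.Perm.sign τ) with hs | hs <;> rw [hs]
  · simpa using hprod
  · have : ((-1 : ℤˣ) • ∏ i, M (τ i) i) = -(∏ i, M (τ i) i) := by
      simp [Units.smul_def]
    rw [this]
    exact hprod.neg

lemma descend_span {k K : Type*} [Field k] [Field K] [Algebra k K] {ι : Type*} [Fintype ι]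
    (S : ι → MvPolynomial σ k) (f : MvPolynomial σ k)
    (h : map (algebraMap k K) f ∈ Ideal.span (Set.range fun i => map (algebraMap k K) (S i))) :
    f ∈ Ideal.span (Set.range S) := by
  classical
  obtain ⟨g, hg⟩ := (Ideal.mem_span_range_iff_exists_fun).mp h
  obtain ⟨π, hπ⟩ := (Algebra.linearMap k K).exists_leftInverse_of_injective
    (LinearMap.ker_eq_bot.mpr (algebraMap k K).injective)
  let Φ : MvPolynomial σ K →+ MvPolynomial σ k :=
    { toFun := AddMonoidAlgebra.map π.toAddMonoidHom, map_zero' := AddMonoidAlgebra.map_zero _,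
      map_add' := AddMonoidAlgebra.map_add _ }
  have hcoeff : ∀ (q : MvPolynomial σ K) (u : σ →₀ ℕ), coeff u (Φ q) = π (coeff u q) :=
    fun q u => rfl
  have key1 : ∀ h₀ : MvPolynomial σ k, Φ (map (algebraMap k K) h₀) = h₀ := by
    intro h₀
    ext u
    rw [hcoeff, coeff_map]
    have := LinearMap.congr_fun hπ (coeff u h₀)
    simpa using this
  have key2 : ∀ (q : MvPolynomial σ K) (h₀ : MvPolynomial σ k),
      Φ (q * map (algebraMap k K) h₀) = Φ q * h₀ := by
    intro q h₀
    ext u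
    rw [hcoeff, coeff_mul, coeff_mul, map_sum]
    apply Finset.sum_congr rfl
    intro uv _
    rw [hcoeff, coeff_map, mul_comm (coeff uv.1 q), ← Algebra.smul_def, map_smul,
      smul_eq_mul, mul_comm]
  have : f = ∑ i, Φ (g i) * S i := by
    conv_lhs => rw [← key1 f, ← hg]
    rw [map_sum]
    exact Finset.sum_congr rfl fun i _ => key2 _ _
  rw [this]
  exact Ideal.sum_mem _ fun i _ =>
    Ideal.mul_mem_left _ _ (Ideal.subset_span ⟨i, rfl⟩)

end JacobianAux

open JacobianAux

/-- Jacobian criterion with reduction mod `p`.  Let `I ⊂ ℤ[x₀,…,x_n]` be generated by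
homogeneous forms `F₀,…,F_{m-1}` defining a projective scheme `X` over `ℚ` of pure
codimension `c`, and let `J` be generated by the `Fᵢ` together with all `c × c` minors
of the Jacobian matrix `(∂Fᵢ/∂xⱼ)`.  If for some prime `p` the scheme `V(J mod p)` in
`ℙⁿ` over `ℤ/(p)` is empty (codimension `> n`), then `X` is smooth over `ℚ`: at every
point of `X` over `ℚ̄` some `c × c` minor of the Jacobian is nonvanishing. -/
theorem jacobian_criterion_mod_p (n m c : ℕ)
    (F : Fin m → MvPolynomial (Fin (n + 1)) ℤ) (d : Fin m → ℕ)
    (hF : ∀ i, (F i).IsHomogeneous (d i))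
    (hcodim : ringKrullDim (MvPolynomial (Fin (n + 1)) ℚ ⧸
        Ideal.span (Set.range fun i => map (Int.castRingHom ℚ) (F i))) = (n + 1 - c : ℕ))
    (p : ℕ) (hp : Fact p.Prime)
    (hmodp : ¬ ∃ x : Fin (n + 1) → AlgebraicClosure (ZMod p), x ≠ 0 ∧
        (∀ i, eval x (map (Int.castRingHom (AlgebraicClosure (ZMod p))) (F i)) = 0) ∧
        (∀ (r : Fin c → Fin m) (s : Fin c → Fin (n + 1)),
          (Matrix.of fun a b : Fin c =>
            eval x (map (Int.castRingHom (AlgebraicClosure (ZMod p)))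
              (pderiv (s b) (F (r a))))).det = 0)) :
    ∀ x : Fin (n + 1) → AlgebraicClosure ℚ, x ≠ 0 →
      (∀ i, eval x (map (Int.castRingHom (AlgebraicClosure ℚ)) (F i)) = 0) →
      ∃ (r : Fin c → Fin m) (s : Fin c → Fin (n + 1)),
        (Matrix.of fun a b : Fin c =>
          eval x (map (Int.castRingHom (AlgebraicClosure ℚ))
            (pderiv (s b) (F (r a))))).det ≠ 0 := by
  classical
  intro x hx0 hxF
  by_contra hcon
  push_neg at hcon
  -- the combined system of generators
  set G : (Fin m ⊕ ((Fin c → Fin m) × (Fin c → Fin (n + 1)))) → MvPolynomial (Fin (n + 1)) ℤ :=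
    Sum.elim F
      (fun rs => (Matrix.of fun a b : Fin c => pderiv (rs.2 b) (F (rs.1 a))).det) with hGdef
  have hGhom : ∀ idx, ∃ e, (G idx).IsHomogeneous e := by
    rintro (i | ⟨r, s⟩)
    · exact ⟨d i, hF i⟩
    · exact ⟨∑ a, (d (r a) - 1),
        isHomogeneous_det _ _ (fun a b => isHomogeneous_pderiv (hF (r a)) (s b))⟩
  set J : Ideal (MvPolynomial (Fin (n + 1)) ℤ) := Ideal.span (Set.range G) with hJdef
  have hJhom : J.IsHomogeneous (homogeneousSubmodule (Fin (n + 1)) ℤ) := by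
    apply Ideal.homogeneous_span
    rintro g ⟨idx, rfl⟩
    obtain ⟨e, he⟩ := hGhom idx
    exact ⟨e, (mem_homogeneousSubmodule _ _).mpr he⟩
  -- everything in J vanishes at x over ℚ̄
  set ev : MvPolynomial (Fin (n + 1)) ℤ →+* AlgebraicClosure ℚ :=
    (eval x).comp (map (Int.castRingHom (AlgebraicClosure ℚ))) with hevdef
  have hevJ : ∀ g ∈ J, ev g = 0 := by
    intro g hg
    have hle : J ≤ RingHom.ker ev := by
      rw [hJdef, Ideal.span_le]
      rintro _ ⟨idx, rfl⟩
      rw [SetLike.mem_coe, RingHom.mem_ker]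
      rcases idx with i | ⟨r, s⟩
      · exact hxF i
      · show ev (Matrix.of fun a b : Fin c => pderiv (s b) (F (r a))).det = 0
        rw [RingHom.map_det]
        exact hcon r s
    exact hle hg
  -- zero locus mod p is trivial
  set J_L : Ideal (MvPolynomial (Fin (n + 1)) (AlgebraicClosure (ZMod p))) :=
    Ideal.span (Set.range fun idx =>
      map (Int.castRingHom (AlgebraicClosure (ZMod p))) (G idx)) with hJLdef
  have hzero : ∀ y ∈ zeroLocus (AlgebraicClosure (ZMod p)) J_L, y = (0 : Fin (n + 1) → AlgebraicClosure (ZMod p)) := by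
    intro y hy
    by_contra hy0
    apply hmodp
    refine ⟨y, hy0, ?_, ?_⟩
    · intro i
      exact hy _ (Ideal.subset_span ⟨Sum.inl i, rfl⟩)
    · intro r s
      have hmem := hy _ (Ideal.subset_span ⟨Sum.inr (r, s), rfl⟩)
      have h2 : ((((eval y).comp (map (Int.castRingHom (AlgebraicClosure (ZMod p))))).mapMatrix
          (Matrix.of fun a b : Fin c => pderiv (s b) (F (r a)))).det :
            AlgebraicClosure (ZMod p)) = 0 := by
        rw [← RingHom.map_det]
        exact hmem
      exact h2
  -- Nullstellensatz over the algebraic closure of ZMod p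
  have hrad : ∀ j : Fin (n + 1), ∃ k : ℕ,
      (X j : MvPolynomial (Fin (n + 1)) (AlgebraicClosure (ZMod p))) ^ k ∈ J_L := by
    intro j
    have hXmem : (X j : MvPolynomial (Fin (n + 1)) (AlgebraicClosure (ZMod p))) ∈
        J_L.radical := by
      rw [← vanishingIdeal_zeroLocus_eq_radical (K := AlgebraicClosure (ZMod p)), mem_vanishingIdeal_iff]
      intro y hy
      rw [hzero y hy]
      simp
    exact hXmem
  choose Nj hNj using hrad
  set N : ℕ := (Finset.univ.sup Nj) + 1 with hNdef
  have hN1 : 1 ≤ N := Nat.le_add_left 1 _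
  have hXN : ∀ j : Fin (n + 1),
      (X j : MvPolynomial (Fin (n + 1)) (AlgebraicClosure (ZMod p))) ^ N ∈ J_L := by
    intro j
    have hle : Nj j ≤ N := le_trans (Finset.le_sup (Finset.mem_univ j)) (Nat.le_succ _)
    have hXeq : (X j : MvPolynomial (Fin (n + 1)) (AlgebraicClosure (ZMod p))) ^ N
        = X j ^ (Nj j) * X j ^ (N - Nj j) := by
      rw [← pow_add, Nat.add_sub_cancel' hle]
    rw [hXeq]
    exact Ideal.mul_mem_right _ _ (hNj j)
  -- descend: over ℤ, X j ^ N ∈ J + (p)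
  have hkey : ∀ j : Fin (n + 1), ∃ u ∈ J, ∃ w,
      (X j : MvPolynomial (Fin (n + 1)) ℤ) ^ N = u + C (p : ℤ) * w := by
    intro j
    have hfac : ∀ q : MvPolynomial (Fin (n + 1)) ℤ,
        map (algebraMap (ZMod p) (AlgebraicClosure (ZMod p)))
          (map (Int.castRingHom (ZMod p)) q)
          = map (Int.castRingHom (AlgebraicClosure (ZMod p))) q := by
      intro q
      have hcast : (algebraMap (ZMod p) (AlgebraicClosure (ZMod p))).comp
          (Int.castRingHom (ZMod p)) = Int.castRingHom (AlgebraicClosure (ZMod p)) :=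
        RingHom.ext_int _ _
      rw [map_map, hcast]
    have hdesc : map (Int.castRingHom (ZMod p)) ((X j : MvPolynomial (Fin (n + 1)) ℤ) ^ N) ∈
        Ideal.span (Set.range fun idx => map (Int.castRingHom (ZMod p)) (G idx)) := by
      apply descend_span (K := AlgebraicClosure (ZMod p))
        (fun idx => map (Int.castRingHom (ZMod p)) (G idx))
      simp only [hfac]
      simp only [map_pow, map_X]
      exact hXN j
    obtain ⟨g, hg⟩ := (Ideal.mem_span_range_iff_exists_fun).mp hdesc
    have hlift : ∀ idx, ∃ h : MvPolynomial (Fin (n + 1)) ℤ,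
        map (Int.castRingHom (ZMod p)) h = g idx :=
      fun idx => MvPolynomial.map_surjective _ ZMod.intCast_surjective (g idx)
    choose h hh using hlift
    have hker : (X j : MvPolynomial (Fin (n + 1)) ℤ) ^ N - ∑ idx, h idx * G idx ∈
        RingHom.ker (map (Int.castRingHom (ZMod p)) :
          MvPolynomial (Fin (n + 1)) ℤ →+* MvPolynomial (Fin (n + 1)) (ZMod p)) := by
      rw [RingHom.mem_ker, map_sub, map_sum, sub_eq_zero, ← hg]
      apply Finset.sum_congr rfl
      intro idx _
      rw [map_mul, hh]
    rw [MvPolynomial.ker_map, ZMod.ker_intCastRingHom, Ideal.map_span, Set.image_singleton,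
      Ideal.mem_span_singleton] at hker
    obtain ⟨w, hw⟩ := hker
    refine ⟨∑ idx, h idx * G idx, ?_, w, ?_⟩
    · exact Ideal.sum_mem _ fun idx _ =>
        Ideal.mul_mem_left _ _ (Ideal.subset_span ⟨idx, rfl⟩)
    · rw [← hw]
      push_cast
      ring
  -- Nakayama setup
  set M : ℕ := (n + 1) * N with hMdef
  have hMpos : 0 < M := Nat.mul_pos (Nat.succ_pos n) hN1
  set Dset : Set (Fin (n + 1) →₀ ℕ) := {u | u.degree = M} with hDdef
  set Sset : Set (MvPolynomial (Fin (n + 1)) ℤ) :=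
    (fun u => (monomial u (1 : ℤ))) '' Dset with hSdef
  have hDfin : Dset.Finite :=
    Set.Finite.subset (Finsupp.finite_of_degree_le M) (fun u hu => le_of_eq hu)
  have hSfin : Sset.Finite := hDfin.image _
  -- homogeneous degree M polynomials lie in the ℤ-span of Sset
  have hspan : ∀ f : MvPolynomial (Fin (n + 1)) ℤ, f.IsHomogeneous M →
      f ∈ Submodule.span ℤ Sset := by
    intro f hf
    suffices hsuff : ∑ u ∈ f.support, monomial u (coeff u f) ∈ Submodule.span ℤ Sset by
      rwa [support_sum_monomial_coeff] at hsuff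
    apply Submodule.sum_mem
    intro u hu
    have hud : u.degree = M := by
      by_contra hne
      exact (mem_support_iff.mp hu) (hf.coeff_eq_zero hne)
    have hsm : (monomial u (coeff u f) : MvPolynomial (Fin (n + 1)) ℤ)
        = (coeff u f) • monomial u 1 := by
      rw [smul_monomial, smul_eq_mul, mul_one]
    rw [hsm]
    exact Submodule.smul_mem _ _ (Submodule.subset_span ⟨u, hud, rfl⟩)
  set J' : Submodule ℤ (MvPolynomial (Fin (n + 1)) ℤ) :=
    Submodule.restrictScalars ℤ J with hJ'def
  set π := J'.mkQ with hπdef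
  set Nmod : Submodule ℤ (MvPolynomial (Fin (n + 1)) ℤ ⧸ J') :=
    Submodule.span ℤ (π '' Sset) with hNmoddef
  have hFG : Nmod.FG := Submodule.fg_span (hSfin.image _)
  have hdec : ∀ (f : MvPolynomial (Fin (n + 1)) ℤ) (i : ℕ),
      ((DirectSum.decompose (homogeneousSubmodule (Fin (n + 1)) ℤ) f i :
        homogeneousSubmodule (Fin (n + 1)) ℤ i) : MvPolynomial (Fin (n + 1)) ℤ)
        = homogeneousComponent i f :=
    fun f i => MvPolynomial.decomposition.decompose'_apply f i
  have hle : Nmod ≤ (Ideal.span {(p : ℤ)}) • Nmod := by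
    rw [hNmoddef, Submodule.span_le]
    rintro _ ⟨_, ⟨u, hu, rfl⟩, rfl⟩
    -- pigeonhole: some exponent is ≥ N
    have hsum : ∑ j, u j = (n + 1) * N := by
      rw [← degree_eq_sum_univ]; exact hu
    have hj : ∃ j : Fin (n + 1), N ≤ u j := by
      by_contra hno
      push_neg at hno
      have hlt : ∑ j : Fin (n + 1), u j < ∑ _j : Fin (n + 1), N :=
        Finset.sum_lt_sum_of_nonempty Finset.univ_nonempty (fun j _ => hno j)
      rw [hsum, Finset.sum_const, Finset.card_univ, Fintype.card_fin, smul_eq_mul] at hlt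
      omega
    obtain ⟨j, hjN⟩ := hj
    obtain ⟨u₀, hu₀, w, hw⟩ := hkey j
    set v : Fin (n + 1) →₀ ℕ := u - Finsupp.single j N with hvdef
    have huv : u = Finsupp.single j N + v := by
      ext k
      by_cases hk : k = j
      · subst hk
        simp only [Finsupp.add_apply, Finsupp.tsub_apply, Finsupp.single_eq_same, hvdef]
        omega
      · simp [hvdef, Finsupp.add_apply, Finsupp.tsub_apply, Finsupp.single_apply, Ne.symm hk]
    have hmon : (monomial u (1 : ℤ)) = (X j : MvPolynomial (Fin (n + 1)) ℤ) ^ N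
        * monomial v 1 := by
      rw [X_pow_eq_monomial, monomial_mul, one_mul, ← huv]
    have hJmem : (monomial u (1 : ℤ)) - C (p : ℤ) * (w * monomial v 1) ∈ J := by
      have heq : (monomial u (1 : ℤ)) - C (p : ℤ) * (w * monomial v 1)
          = u₀ * monomial v 1 := by
        rw [hmon, hw]; ring
      rw [heq]
      exact Ideal.mul_mem_right _ _ hu₀
    have hcomp := hJhom M hJmem
    rw [hdec] at hcomp
    have hmonhom : (monomial u (1 : ℤ)).IsHomogeneous M := isHomogeneous_monomial _ hu
    have hcompeq : homogeneousComponent M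
        ((monomial u (1 : ℤ)) - C (p : ℤ) * (w * monomial v 1))
        = monomial u 1 - (p : ℤ) • homogeneousComponent M (w * monomial v 1) := by
      rw [map_sub, MvPolynomial.C_mul', map_smul]
      congr 1
      rw [homogeneousComponent_of_mem ((mem_homogeneousSubmodule _ _).mpr hmonhom), if_pos rfl]
    rw [hcompeq] at hcomp
    have hhmem : homogeneousComponent M (w * monomial v 1) ∈ Submodule.span ℤ Sset :=
      hspan _ (homogeneousComponent_isHomogeneous M _)
    -- π (monomial u 1) = p • π h
    have hπeq : π (monomial u (1 : ℤ))
        = (p : ℤ) • π (homogeneousComponent M (w * monomial v 1)) := by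
      rw [← map_smul, ← sub_eq_zero, ← map_sub, hπdef, Submodule.mkQ_apply,
        Submodule.Quotient.mk_eq_zero]
      exact hcomp
    rw [hπeq]
    apply Submodule.smul_mem_smul (Ideal.mem_span_singleton_self _)
    have hmap : π (homogeneousComponent M (w * monomial v 1))
        ∈ Submodule.map π (Submodule.span ℤ Sset) := Submodule.mem_map_of_mem hhmem
    rwa [Submodule.map_span] at hmap
  obtain ⟨r, hr1, hr0⟩ :=
    Submodule.exists_sub_one_mem_and_smul_eq_zero_of_fg_of_le_smul
      (Ideal.span {(p : ℤ)}) Nmod hFG hle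
  have hrne : r ≠ 0 := by
    intro h0
    rw [h0, zero_sub, Ideal.mem_span_singleton] at hr1
    have hdvd : (p : ℤ) ∣ 1 := (dvd_neg.mp hr1)
    have hple : (p : ℤ) ≤ 1 := Int.le_of_dvd one_pos hdvd
    have := hp.out.two_le
    omega
  -- each x j is zero: contradiction
  apply hx0
  funext j
  have hdegM : (Finsupp.single j M).degree = M := degree_single j M
  have hmem : π (monomial (Finsupp.single j M) (1 : ℤ)) ∈ Nmod :=
    Submodule.subset_span ⟨_, ⟨Finsupp.single j M, hdegM, rfl⟩, rfl⟩
  have hzero' := hr0 _ hmem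
  rw [← map_smul, hπdef, Submodule.mkQ_apply, Submodule.Quotient.mk_eq_zero] at hzero'
  have hJmem : r • (monomial (Finsupp.single j M) (1 : ℤ)) ∈ J := hzero'
  have hev := hevJ _ hJmem
  rw [← X_pow_eq_monomial] at hev
  have hevcalc : ev (r • (X j : MvPolynomial (Fin (n + 1)) ℤ) ^ M)
      = (r : AlgebraicClosure ℚ) * (x j) ^ M := by
    rw [zsmul_eq_mul, map_mul, map_pow]
    congr 1
    · simp [hevdef]
    · simp [hevdef]
  rw [hevcalc] at hev
  have hxjM : (x j) ^ M = 0 := by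
    rcases mul_eq_zero.mp hev with h | h
    · exact absurd h (Int.cast_ne_zero.mpr hrne)
    · exact h
  exact pow_eq_zero_iff hMpos.ne' |>.mp hxjM
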